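/- Let E be a real normed vector space, let κ > 0 and σ̃ ≥ 0, c̃ ≥ 0 be constants, and let α̲, ᾱ : [0,∞) → [0,∞) be continuous strictly increasing functions with α̲(0) = ᾱ(0) = 0 and α̲ a bijection of [0,∞) onto itself (class-K∞ functions). Let φ, ψ : [0,∞) → E be two curves and let W : [0,∞) → ℝ be differentiable with derivative W′(t) at every t ≥ 0. Assume that for all t ≥ 0 one has the sandwich bounds α̲(‖φ(t) − ψ(t)‖) ≤ W(t) ≤ ᾱ(‖φ(t) − ψ(t)‖) and the decay inequality W′(t) ≤ −κ·W(t) + σ̃ + c̃. Then for every t ≥ 0, ‖φ(t) − ψ(t)‖ ≤ α̲⁻¹(3·e^{−κt}·ᾱ(‖φ(0) − ψ(0)‖)) + α̲⁻¹(3·σ̃/κ) + α̲⁻¹(3·c̃/κ), where α̲⁻¹ denotes the inverse function of α̲. -/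

import Mathlib

open Real Set

/-- Core of Theorem 1: a δ-ISpS Lyapunov function along a fixed pair of
trajectories yields the δ-ISpS estimate. -/
theorem deltaISpS_of_Lyapunov
    {E : Type*} [NormedAddCommGroup E] [NormedSpace ℝ E]
    (κ σt ct : ℝ) (hκ : 0 < κ) (hσ : 0 ≤ σt) (hc : 0 ≤ ct)
    (uα oα αinv : ℝ → ℝ)
    -- `uα` (α̲) and `oα` (ᾱ) are class-K∞ functions on [0,∞)
    (huα_cont : ContinuousOn uα (Ici 0)) (huα_mono : StrictMonoOn uα (Ici 0))
    (huα_zero : uα 0 = 0)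
    (hoα_cont : ContinuousOn oα (Ici 0)) (hoα_mono : StrictMonoOn oα (Ici 0))
    (hoα_zero : oα 0 = 0) (hoα_maps : MapsTo oα (Ici 0) (Ici 0))
    -- `uα` is a bijection of [0,∞) onto itself, with inverse `αinv`
    (huα_bij : BijOn uα (Ici 0) (Ici 0))
    (hinv : InvOn αinv uα (Ici 0) (Ici 0))
    (φ ψ : ℝ → E) (W W' : ℝ → ℝ)
    (hW_deriv : ∀ t, 0 ≤ t → HasDerivAt W (W' t) t)
    (h_lower : ∀ t, 0 ≤ t → uα ‖φ t - ψ t‖ ≤ W t)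
    (h_upper : ∀ t, 0 ≤ t → W t ≤ oα ‖φ t - ψ t‖)
    (h_decay : ∀ t, 0 ≤ t → W' t ≤ -κ * W t + σt + ct) :
    ∀ t, 0 ≤ t →
      ‖φ t - ψ t‖ ≤
        αinv (3 * Real.exp (-κ * t) * oα ‖φ 0 - ψ 0‖) +
          αinv (3 * σt / κ) + αinv (3 * ct / κ) := by
  -- αinv maps Ici 0 to Ici 0 and is monotone there
  have hαinv_maps : ∀ y : ℝ, 0 ≤ y → 0 ≤ αinv y := by
    intro y hy
    obtain ⟨x, hx, hxy⟩ := huα_bij.2.2 hy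
    have : αinv y = x := by rw [← hxy]; exact hinv.1 hx
    rw [this]; exact hx
  have hαinv_mono : ∀ y₁ y₂ : ℝ, 0 ≤ y₁ → 0 ≤ y₂ → y₁ ≤ y₂ → αinv y₁ ≤ αinv y₂ := by
    intro y₁ y₂ h₁ h₂ hle
    obtain ⟨x₁, hx₁, hxy₁⟩ := huα_bij.2.2 h₁
    obtain ⟨x₂, hx₂, hxy₂⟩ := huα_bij.2.2 h₂
    have e₁ : αinv y₁ = x₁ := by rw [← hxy₁]; exact hinv.1 hx₁
    have e₂ : αinv y₂ = x₂ := by rw [← hxy₂]; exact hinv.1 hx₂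
    rw [e₁, e₂]
    by_contra h
    push_neg at h
    have := huα_mono hx₂ hx₁ h
    rw [hxy₁, hxy₂] at this
    linarith
  intro t ht
  set K : ℝ := (σt + ct) / κ with hK
  have hK0 : 0 ≤ K := div_nonneg (by linarith) hκ.le
  have hKκ : κ * K = σt + ct := by rw [hK]; field_simp [hκ.ne']
  -- Grönwall estimate
  have key : W t ≤ Real.exp (-κ * t) * W 0 + K := by
    set g : ℝ → ℝ := fun s => Real.exp (κ * s) * (W s - K) with hg
    have hderiv : ∀ s ∈ Ici (0:ℝ),
        HasDerivAt g (Real.exp (κ * s) * (W' s + κ * (W s - K))) s := by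
      intro s hs
      have h1 : HasDerivAt (fun s => Real.exp (κ * s)) (κ * Real.exp (κ * s)) s := by
        simpa [mul_comm, Function.comp_def] using
          (Real.hasDerivAt_exp (κ * s)).comp s ((hasDerivAt_id s).const_mul κ)
      have h2 : HasDerivAt (fun s => W s - K) (W' s) s := (hW_deriv s hs).sub_const K
      have : HasDerivAt (fun y => Real.exp (κ * y) * (W y - K)) _ s := h1.fun_mul h2
      convert this using 1
      ring
    have hanti : AntitoneOn g (Ici 0) := by
      apply antitoneOn_of_deriv_nonpos (convex_Ici 0)
      · exact fun s hs => (hderiv s hs).continuousAt.continuousWithinAt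
      · intro s hs
        rw [interior_Ici] at hs
        exact (hderiv s (show (0:ℝ) ≤ s from le_of_lt hs)).differentiableAt.differentiableWithinAt
      · intro s hs
        rw [interior_Ici] at hs
        have hs' : (0:ℝ) ≤ s := le_of_lt hs
        rw [(hderiv s hs').deriv]
        have hd := h_decay s hs'
        have hle : W' s + κ * (W s - K) ≤ 0 := by nlinarith
        exact mul_nonpos_of_nonneg_of_nonpos (Real.exp_pos _).le hle
    have hgt : g t ≤ g 0 := hanti self_mem_Ici ht ht
    simp only [hg, mul_zero, Real.exp_zero, one_mul] at hgt
    have he : Real.exp (-κ * t) * Real.exp (κ * t) = 1 := by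
      rw [← Real.exp_add]; ring_nf; exact Real.exp_zero
    have he1 : Real.exp (-κ * t) ≤ 1 := Real.exp_le_one_iff.mpr (by nlinarith)
    have hep : 0 < Real.exp (-κ * t) := Real.exp_pos _
    have h2 : W t - K ≤ Real.exp (-κ * t) * (W 0 - K) := by
      calc W t - K = (Real.exp (-κ * t) * Real.exp (κ * t)) * (W t - K) := by
            rw [he]; ring
        _ = Real.exp (-κ * t) * (Real.exp (κ * t) * (W t - K)) := by ring
        _ ≤ Real.exp (-κ * t) * (W 0 - K) := mul_le_mul_of_nonneg_left hgt hep.le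
    nlinarith [mul_nonneg hep.le hK0, h2]
  -- combine with sandwich bounds
  have hd0 : (0:ℝ) ≤ ‖φ 0 - ψ 0‖ := norm_nonneg _
  have hoα0 : 0 ≤ oα ‖φ 0 - ψ 0‖ := hoα_maps hd0
  set A : ℝ := Real.exp (-κ * t) * oα ‖φ 0 - ψ 0‖ with hA
  set B : ℝ := σt / κ with hB
  set C : ℝ := ct / κ with hC
  have hA0 : 0 ≤ A := mul_nonneg (Real.exp_pos _).le hoα0
  have hB0 : 0 ≤ B := div_nonneg hσ hκ.le
  have hC0 : 0 ≤ C := div_nonneg hc hκ.le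
  set d : ℝ := ‖φ t - ψ t‖ with hdd
  have hd : (0:ℝ) ≤ d := norm_nonneg _
  have hmain : uα d ≤ A + B + C := by
    have h1 := h_lower t ht
    have h2 : Real.exp (-κ * t) * W 0 ≤ A := by
      have := h_upper 0 le_rfl
      exact mul_le_mul_of_nonneg_left this (Real.exp_pos _).le
    have hKBC : K = B + C := by rw [hK, hB, hC]; ring
    linarith
  have haux : ∀ y : ℝ, 0 ≤ y → uα d ≤ y → d ≤ αinv y := by
    intro y hy hdy
    have huαd : 0 ≤ uα d := by rw [← huα_zero]; exact (huα_mono.monotoneOn) self_mem_Ici hd hd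
    have : αinv (uα d) = d := hinv.1 hd
    calc d = αinv (uα d) := this.symm
      _ ≤ αinv y := hαinv_mono _ _ huαd hy hdy
  have hcase : uα d ≤ 3 * A ∨ uα d ≤ 3 * B ∨ uα d ≤ 3 * C := by
    by_contra h
    push_neg at h
    obtain ⟨p, q, r⟩ := h
    linarith
  have e3A : (3 : ℝ) * Real.exp (-κ * t) * oα ‖φ 0 - ψ 0‖ = 3 * A := by rw [hA]; ring
  have e3B : (3 : ℝ) * σt / κ = 3 * B := by rw [hB]; ring
  have e3C : (3 : ℝ) * ct / κ = 3 * C := by rw [hC]; ring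
  rw [e3A, e3B, e3C]
  rcases hcase with h | h | h
  · have := haux _ (by linarith) h
    have n2 := hαinv_maps (3 * B) (by linarith)
    have n3 := hαinv_maps (3 * C) (by linarith)
    linarith
  · have := haux _ (by linarith) h
    have n2 := hαinv_maps (3 * A) (by linarith)
    have n3 := hαinv_maps (3 * C) (by linarith)
    linarith
  · have := haux _ (by linarith) h
    have n2 := hαinv_maps (3 * A) (by linarith)
    have n3 := hαinv_maps (3 * B) (by linarith)
    linarith
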